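/- The system Sh+ε (Shepherdson's system with Leśniewski's copula) is sound and complete: a formula is a thesis of Sh+ε if and only if it is true in every model (U, D), where S ε P is interpreted as 'D(S) is a singleton included in D(P)'. -/

import Mathlib

inductive EForm : Type
  | atomA : Nat → Nat → EForm
  | atomI : Nat → Nat → EForm
  | atomE : Nat → Nat → EForm
  | atomO : Nat → Nat → EForm
  | atomEps : Nat → Nat → EForm
  | neg : EForm → EForm
  | conj : EForm → EForm → EForm
  | disj : EForm → EForm → EForm
  | impl : EForm → EForm → EForm
  | equiv : EForm → EForm → EForm
  deriving DecidableEq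

namespace EForm

def beval (vA vI vE vO vEp : Nat → Nat → Bool) : EForm → Bool
  | atomA s p => vA s p
  | atomI s p => vI s p
  | atomE s p => vE s p
  | atomO s p => vO s p
  | atomEps s p => vEp s p
  | neg φ => !(beval vA vI vE vO vEp φ)
  | conj φ ψ => beval vA vI vE vO vEp φ && beval vA vI vE vO vEp ψ
  | disj φ ψ => beval vA vI vE vO vEp φ || beval vA vI vE vO vEp ψ
  | impl φ ψ => !(beval vA vI vE vO vEp φ) || beval vA vI vE vO vEp ψ
  | equiv φ ψ => beval vA vI vE vO vEp φ == beval vA vI vE vO vEp ψ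

def Taut (φ : EForm) : Prop := ∀ vA vI vE vO vEp, beval vA vI vE vO vEp φ = true

def rename (σ : Nat → Nat) : EForm → EForm
  | atomA s p => atomA (σ s) (σ p)
  | atomI s p => atomI (σ s) (σ p)
  | atomE s p => atomE (σ s) (σ p)
  | atomO s p => atomO (σ s) (σ p)
  | atomEps s p => atomEps (σ s) (σ p)
  | neg φ => neg (rename σ φ)
  | conj φ ψ => conj (rename σ φ) (rename σ ψ)
  | disj φ ψ => disj (rename σ φ) (rename σ ψ)
  | impl φ ψ => impl (rename σ φ) (rename σ ψ)
  | equiv φ ψ => equiv (rename σ φ) (rename σ ψ)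

/-- Set-theoretic interpretation; `S ε P` is true iff `D S` is a singleton
whose only element is in `D P`. -/
def eval {α : Type} (D : Nat → Set α) : EForm → Prop
  | atomA s p => D s ⊆ D p
  | atomI s p => (D s ∩ D p).Nonempty
  | atomE s p => ¬ (D s ∩ D p).Nonempty
  | atomO s p => ¬ D s ⊆ D p
  | atomEps s p => ∃ x, D s = {x} ∧ x ∈ D p
  | neg φ => ¬ eval D φ
  | conj φ ψ => eval D φ ∧ eval D ψ
  | disj φ ψ => eval D φ ∨ eval D ψ
  | impl φ ψ => eval D φ → eval D ψ
  | equiv φ ψ => eval D φ ↔ eval D ψ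

/-- The specific axioms of Sh+ε: Shepherdson's axioms, the definitions of `e`
and `o`, and the ε-axioms. -/
def ShEpsAx : EForm → Prop := fun φ =>
  (∃ S, φ = atomA S S) ∨
  (∃ M P S, φ = impl (conj (atomA M P) (atomA S M)) (atomA S P)) ∨
  (∃ M P S, φ = impl (conj (atomA M P) (atomI M S)) (atomI S P)) ∨
  (∃ S P, φ = impl (atomI S P) (atomI S S)) ∨
  (∃ S P, φ = impl (neg (atomI S S)) (atomA S P)) ∨
  (∃ S P, φ = equiv (atomE S P) (neg (atomI S P))) ∨
  (∃ S P, φ = equiv (atomO S P) (neg (atomA S P))) ∨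
  (∃ S P, φ = impl (atomEps S P) (atomEps S S)) ∨
  (∃ S P, φ = impl (atomEps S P) (atomA S P)) ∨
  (∃ S, φ = impl (atomEps S S) (atomI S S)) ∨
  (∃ S M P, φ = impl (conj (atomA S M) (conj (atomEps M M) (atomI S P))) (atomEps S P))

inductive Deriv (Ax : EForm → Prop) : EForm → Prop
  | ax {φ} : Ax φ → Deriv Ax φ
  | taut {φ} : Taut φ → Deriv Ax φ
  | mp {φ ψ} : Deriv Ax (impl φ ψ) → Deriv Ax φ → Deriv Ax ψ
  | subst {φ} (σ : Nat → Nat) : Deriv Ax φ → Deriv Ax (rename σ φ)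

/-- Derivability from a set of premises (premises are used without
substitution, as usual). -/
inductive ProvesFrom (Γ : Set EForm) : EForm → Prop
  | thm {φ} : Deriv ShEpsAx φ → ProvesFrom Γ φ
  | prem {φ} : φ ∈ Γ → ProvesFrom Γ φ
  | mp {φ ψ} : ProvesFrom Γ (impl φ ψ) → ProvesFrom Γ φ → ProvesFrom Γ ψ

def Consistent (Γ : Set EForm) : Prop :=
  ¬ ∃ φ, ProvesFrom Γ φ ∧ ProvesFrom Γ (neg φ)

def MaxConsistent (Γ : Set EForm) : Prop :=
  Consistent Γ ∧ ∀ φ, φ ∈ Γ ∨ neg φ ∈ Γ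

end EForm

open EForm

namespace ShAux

/-! ### Soundness helpers -/

theorem eval_rename {α : Type} (D : Nat → Set α) (σ : Nat → Nat) :
    ∀ φ : EForm, eval D (rename σ φ) ↔ eval (fun n => D (σ n)) φ := by
  intro φ
  induction φ with
  | atomA s p => simp [rename, eval]
  | atomI s p => simp [rename, eval]
  | atomE s p => simp [rename, eval]
  | atomO s p => simp [rename, eval]
  | atomEps s p => simp [rename, eval]
  | neg φ ih => simp [rename, eval, ih]
  | conj φ ψ ih1 ih2 => simp [rename, eval, ih1, ih2]
  | disj φ ψ ih1 ih2 => simp [rename, eval, ih1, ih2]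
  | impl φ ψ ih1 ih2 => simp [rename, eval, ih1, ih2]
  | equiv φ ψ ih1 ih2 => simp [rename, eval, ih1, ih2]

open Classical in
theorem eval_iff_beval {α : Type} (D : Nat → Set α) (φ : EForm) :
    eval D φ ↔ beval (fun s p => decide (D s ⊆ D p))
      (fun s p => decide ((D s ∩ D p).Nonempty))
      (fun s p => decide (¬ (D s ∩ D p).Nonempty))
      (fun s p => decide (¬ D s ⊆ D p))
      (fun s p => decide (∃ x, D s = {x} ∧ x ∈ D p)) φ = true := by
  induction φ with
  | atomA s p => simp [eval, beval]
  | atomI s p => simp [eval, beval]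
  | atomE s p => simp [eval, beval]
  | atomO s p => simp [eval, beval]
  | atomEps s p => simp [eval, beval]
  | neg φ ih => simp [eval, beval, ih]
  | conj φ ψ ih1 ih2 => simp [eval, beval, ih1, ih2]
  | disj φ ψ ih1 ih2 => simp [eval, beval, ih1, ih2]
  | impl φ ψ ih1 ih2 => simp [eval, beval, ih1, ih2, imp_iff_not_or]
  | equiv φ ψ ih1 ih2 => simp [eval, beval, ih1, ih2, Bool.beq_eq_decide_eq]

theorem soundness {φ : EForm} (h : Deriv ShEpsAx φ) :
    ∀ (U : Type) (D : Nat → Set U), eval D φ := by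
  induction h with
  | ax hax =>
    intro U D
    rcases hax with ⟨S, rfl⟩ | ⟨M, P, S, rfl⟩ | ⟨M, P, S, rfl⟩ | ⟨S, P, rfl⟩ | ⟨S, P, rfl⟩ |
      ⟨S, P, rfl⟩ | ⟨S, P, rfl⟩ | ⟨S, P, rfl⟩ | ⟨S, P, rfl⟩ | ⟨S, rfl⟩ | ⟨S, M, P, rfl⟩
    · exact fun x hx => hx
    · exact fun ⟨h1, h2⟩ x hx => h1 (h2 hx)
    · exact fun ⟨h1, ⟨x, hxM, hxS⟩⟩ => ⟨x, hxS, h1 hxM⟩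
    · exact fun ⟨x, hx, _⟩ => ⟨x, hx, hx⟩
    · intro h x hx; exact absurd ⟨x, hx, hx⟩ h
    · exact Iff.rfl
    · exact Iff.rfl
    · exact fun ⟨x, hx, _⟩ => ⟨x, hx, by rw [hx]; rfl⟩
    · rintro ⟨x, hx, hxp⟩ y hy
      rw [hx] at hy; rwa [show y = x from hy]
    · exact fun ⟨x, hx, hxs⟩ => ⟨x, hxs, hxs⟩
    · rintro ⟨hsub, ⟨x, hMx, _⟩, ⟨y, hyS, hyP⟩⟩
      have hyx : y = x := by have := hsub hyS; rwa [hMx] at this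
      refine ⟨x, ?_, hyx ▸ hyP⟩
      apply Set.Subset.antisymm
      · intro z hz; have := hsub hz; rwa [hMx] at this
      · intro z hz; rw [show z = x from hz, ← hyx]; exact hyS
  | taut ht =>
    intro U D
    exact (eval_iff_beval D _).mpr (ht _ _ _ _ _)
  | mp h1 h2 ih1 ih2 =>
    intro U D
    exact ih1 U D (ih2 U D)
  | subst σ h ih =>
    intro U D
    exact (eval_rename D σ _).mpr (ih U _)

end ShAux
namespace ShAux

/-! ### The canonical model built from a "good" boolean valuation -/

structure Good (vA vI vEp : Nat → Nat → Bool) : Prop where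
  refl : ∀ s, vA s s = true
  barb : ∀ m p s, vA m p = true → vA s m = true → vA s p = true
  dati : ∀ m p s, vA m p = true → vI m s = true → vI s p = true
  iss  : ∀ s p, vI s p = true → vI s s = true
  empt : ∀ s p, vI s s ≠ true → vA s p = true
  e1 : ∀ s p, vEp s p = true → vEp s s = true
  e2 : ∀ s p, vEp s p = true → vA s p = true
  e3 : ∀ s, vEp s s = true → vI s s = true
  e4 : ∀ s m p, vA s m = true → vEp m m = true → vI s p = true → vEp s p = true

variable {vA vI vEp : Nat → Nat → Bool}

theorem Good.isym (hg : Good vA vI vEp) {u w : Nat} (h : vI u w = true) : vI w u = true :=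
  hg.dati u u w (hg.refl u) h

theorem Good.d1 (hg : Good vA vI vEp) {u t : Nat} (h : vA u t = true) (hi : vI u u = true) : vI u t = true :=
  hg.dati u t u h hi

/-- Key lemma A: if `t` is singular and `u ⊆ t` with `u` nonempty, then
`t ⊆ u`, `u` is singular, and `u ε t`. -/
theorem Good.lemA (hg : Good vA vI vEp) {t u : Nat} (htt : vEp t t = true) (hut : vA u t = true)
    (huu : vI u u = true) : vA t u = true ∧ vEp u u = true ∧ vEp u t = true := by
  have hiut : vI u t = true := hg.d1 hut huu
  have heut : vEp u t = true := hg.e4 u t t hut htt hiut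
  have heuu : vEp u u = true := hg.e1 _ _ heut
  have hitu : vI t u = true := hg.isym hiut
  have hetu : vEp t u = true := hg.e4 t t u (hg.refl t) htt hitu
  exact ⟨hg.e2 _ _ hetu, heuu, heut⟩

/-- Key lemma B (one-sided): `r` singular above `u`, with `u i w`. -/
theorem Good.lemB1 (hg : Good vA vI vEp) {u w r : Nat} (huw : vI u w = true) (hrr : vEp r r = true)
    (hur : vA u r = true) : vA r u = true ∧ vA r w = true := by
  have hiuu : vI u u = true := hg.iss u w huw
  obtain ⟨hru, heuu, heur⟩ := hg.lemA hrr hur hiuu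
  have heuw : vEp u w = true := hg.e4 u r w hur hrr huw
  have hAuw : vA u w = true := hg.e2 _ _ heuw
  have hiur : vI u r = true := hg.d1 hur hiuu
  have hirw : vI r w = true := hg.dati u w r hAuw hiur
  have herw : vEp r w = true := hg.e4 r u w hru heuu hirw
  exact ⟨hru, hg.e2 _ _ herw⟩

theorem Good.lemB (hg : Good vA vI vEp) {u w r : Nat} (huw : vI u w = true) (hrr : vEp r r = true)
    (hor : vA u r = true ∨ vA w r = true) : vA r u = true ∧ vA r w = true := by
  rcases hor with h | h
  · exact hg.lemB1 huw hrr h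
  · have := hg.lemB1 (hg.isym huw) hrr h
    exact ⟨this.2, this.1⟩

theorem Good.lemC (hg : Good vA vI vEp) {u w s p : Nat} (huw : vI u w = true)
    (hs : vA u s = true ∨ vA w s = true) (hp : vA u p = true ∨ vA w p = true) :
    vI s p = true := by
  have hwu : vI w u = true := hg.isym huw
  have hiuu : vI u u = true := hg.iss u w huw
  have hiww : vI w w = true := hg.iss w u hwu
  rcases hs with hus | hws <;> rcases hp with hup | hwp
  · exact hg.dati u p s hup (hg.d1 hus hiuu)
  · exact hg.dati w p s hwp (hg.dati u s w hus huw)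
  · exact hg.dati u p s hup (hg.dati w s u hws hwu)
  · exact hg.dati w p s hwp (hg.d1 hws hiww)

/-- The collapsing predicate: `r` is singular and lies above `u` or `w`. -/
def Qp (vA vEp : Nat → Nat → Bool) (u w r : Nat) : Prop :=
  vEp r r = true ∧ (vA u r = true ∨ vA w r = true)

instance (vA vEp : Nat → Nat → Bool) (u w : Nat) : DecidablePred (Qp vA vEp u w) :=
  fun _ => by unfold Qp; infer_instance

/-- Normalization of points: pairs that lie under a singular term collapse
to a canonical point. -/
noncomputable def normp (vA vEp : Nat → Nat → Bool) (z : Nat × Nat × Bool) :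
    Nat × Nat × Bool :=
  @dite _ _ (Classical.dec _) (fun h : ∃ r, Qp vA vEp z.1 z.2.1 r =>
    (Nat.find h, Nat.find h, false)) (fun _ => z)

theorem normp_pos {u w : Nat} {b : Bool} (h : ∃ r, Qp vA vEp u w r) :
    normp vA vEp (u, w, b) = (Nat.find h, Nat.find h, false) := by
  unfold normp; rw [dif_pos h]

theorem normp_neg {u w : Nat} {b : Bool} (h : ¬ ∃ r, Qp vA vEp u w r) :
    normp vA vEp (u, w, b) = (u, w, b) := by
  unfold normp; rw [dif_neg h]

/-- The canonical model. -/
def Dmod (vA vI vEp : Nat → Nat → Bool) (s : Nat) : Set (Nat × Nat × Bool) :=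
  {z | ∃ u w b, vI u w = true ∧ (vA u s = true ∨ vA w s = true) ∧
    normp vA vEp (u, w, b) = z}

theorem mem_Dmod {u w s : Nat} {b : Bool} (huw : vI u w = true)
    (hus : vA u s = true ∨ vA w s = true) :
    normp vA vEp (u, w, b) ∈ Dmod vA vI vEp s :=
  ⟨u, w, b, huw, hus, rfl⟩

/-- L1: membership of a normalized point. -/
theorem normp_mem_iff (hg : Good vA vI vEp) {u w p : Nat} {b : Bool} (huw : vI u w = true) :
    normp vA vEp (u, w, b) ∈ Dmod vA vI vEp p ↔
      (vA u p = true ∨ vA w p = true) := by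
  constructor
  · rintro ⟨u', w', b', hu'w', hp', heq⟩
    by_cases h : ∃ r, Qp vA vEp u w r
    · -- right collapses; then left must collapse too
      rw [normp_pos h] at heq
      by_cases h' : ∃ r, Qp vA vEp u' w' r
      · rw [normp_pos h'] at heq
        have hrr : Nat.find h' = Nat.find h := by
          have := congrArg Prod.fst heq; simpa using this
        obtain ⟨hsing, hor⟩ := Nat.find_spec h
        obtain ⟨hsing', hor'⟩ := Nat.find_spec h'
        rw [hrr] at hor'
        -- the canonical r lies above the primed pair as well
        have hB' := hg.lemB hu'w' hsing hor'
        have hrp : vA (Nat.find h) p = true := by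
          rcases hp' with h1 | h1
          · exact hg.barb u' p _ h1 hB'.1
          · exact hg.barb w' p _ h1 hB'.2
        rcases hor with h1 | h1
        · exact Or.inl (hg.barb _ p u hrp h1)
        · exact Or.inr (hg.barb _ p w hrp h1)
      · rw [normp_neg h'] at heq
        -- impossible: (u,w,b) = (r,r,false) where r is singular, so
        -- (u',w',b') = (r,r,false) would itself collapse
        exfalso
        obtain ⟨hsing, _⟩ := Nat.find_spec h
        apply h'
        refine ⟨Nat.find h, hsing, ?_⟩
        have h1 : u' = Nat.find h := by have := congrArg Prod.fst heq; simpa using this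
        exact Or.inl (h1 ▸ hg.refl (Nat.find h))
    · rw [normp_neg h] at heq
      by_cases h' : ∃ r, Qp vA vEp u' w' r
      · exfalso
        rw [normp_pos h'] at heq
        obtain ⟨hsing, _⟩ := Nat.find_spec h'
        apply h
        refine ⟨Nat.find h', hsing, ?_⟩
        have h1 : u = Nat.find h' := by have := congrArg Prod.fst heq.symm; simpa using this
        exact Or.inl (h1 ▸ hg.refl (Nat.find h'))
      · rw [normp_neg h'] at heq
        cases heq
        exact hp'
  · intro hp
    exact mem_Dmod huw hp

end ShAux
namespace ShAux

variable {vA vI vEp : Nat → Nat → Bool}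

theorem atomA_iff (hg : Good vA vI vEp) (s p : Nat) :
    Dmod vA vI vEp s ⊆ Dmod vA vI vEp p ↔ vA s p = true := by
  constructor
  · intro hsub
    by_cases hss : vI s s = true
    · have hmem : normp vA vEp (s, s, false) ∈ Dmod vA vI vEp s :=
        mem_Dmod hss (Or.inl (hg.refl s))
      have := (normp_mem_iff hg hss).mp (hsub hmem)
      rcases this with h | h <;> exact h
    · exact hg.empt s p hss
  · intro hsp z hz
    obtain ⟨u, w, b, huw, hor, heq⟩ := hz
    refine ⟨u, w, b, huw, ?_, heq⟩
    rcases hor with h | h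
    · exact Or.inl (hg.barb s p u hsp h)
    · exact Or.inr (hg.barb s p w hsp h)

theorem atomI_iff (hg : Good vA vI vEp) (s p : Nat) :
    (Dmod vA vI vEp s ∩ Dmod vA vI vEp p).Nonempty ↔ vI s p = true := by
  constructor
  · rintro ⟨z, hzs, hzp⟩
    obtain ⟨u, w, b, huw, hors, heq⟩ := hzs
    rw [← heq] at hzp
    have horp := (normp_mem_iff hg huw).mp hzp
    exact hg.lemC huw hors horp
  · intro hsp
    refine ⟨normp vA vEp (s, p, false), mem_Dmod hsp (Or.inl (hg.refl s)),
      mem_Dmod hsp (Or.inr (hg.refl p))⟩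

theorem atomEps_iff (hg : Good vA vI vEp) (s p : Nat) :
    (∃ x, Dmod vA vI vEp s = {x} ∧ x ∈ Dmod vA vI vEp p) ↔ vEp s p = true := by
  constructor
  · rintro ⟨x, hDs, hxp⟩
    -- s is nonempty
    have hss : vI s s = true := by
      by_contra hss
      have hx : x ∈ Dmod vA vI vEp s := by rw [hDs]; rfl
      obtain ⟨u, w, b, huw, hor, _⟩ := hx
      exact hss (hg.lemC huw hor hor)
    -- s intersects p
    have hsp : vI s p = true := by
      refine (atomI_iff hg s p).mp ⟨x, ?_, hxp⟩
      rw [hDs]; rfl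
    -- there is a singular term above s
    have hQ : ∃ r, Qp vA vEp s s r := by
      by_contra hQ
      have h1 : normp vA vEp (s, s, false) ∈ Dmod vA vI vEp s :=
        mem_Dmod hss (Or.inl (hg.refl s))
      have h2 : normp vA vEp (s, s, true) ∈ Dmod vA vI vEp s :=
        mem_Dmod hss (Or.inl (hg.refl s))
      rw [hDs] at h1 h2
      rw [normp_neg hQ] at h1 h2
      have : ((s, s, false) : Nat × Nat × Bool) = (s, s, true) := by
        rw [show ((s,s,false) : Nat × Nat × Bool) = x from h1,
          show ((s,s,true) : Nat × Nat × Bool) = x from h2]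
      simp at this
    obtain ⟨r, hrr, hor⟩ := hQ
    have hsr : vA s r = true := by rcases hor with h | h <;> exact h
    exact hg.e4 s r p hsr hrr hsp
  · intro hep
    have hss : vEp s s = true := hg.e1 _ _ hep
    have hiss : vI s s = true := hg.e3 s hss
    have hasp : vA s p = true := hg.e2 _ _ hep
    have hQ : ∃ r, Qp vA vEp s s r := ⟨s, hss, Or.inl (hg.refl s)⟩
    refine ⟨normp vA vEp (s, s, false), ?_, ?_⟩
    · apply Set.eq_singleton_iff_unique_mem.mpr
      refine ⟨mem_Dmod hiss (Or.inl (hg.refl s)), ?_⟩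
      rintro z ⟨u, w, b, huw, hor, heq⟩
      have hQ' : ∃ r, Qp vA vEp u w r := ⟨s, hss, hor⟩
      rw [normp_pos hQ'] at heq
      rw [normp_pos hQ]
      have hfind : Nat.find hQ' = Nat.find hQ := by
        apply le_antisymm
        · -- find hQ' ≤ find hQ since find hQ satisfies Qp u w
          obtain ⟨h0rr, h0or⟩ := Nat.find_spec hQ
          have hs0 : vA s (Nat.find hQ) = true := by rcases h0or with h | h <;> exact h
          apply Nat.find_min' hQ'
          refine ⟨h0rr, ?_⟩
          rcases hor with h | h
          · exact Or.inl (hg.barb s _ u hs0 h)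
          · exact Or.inr (hg.barb s _ w hs0 h)
        · -- find hQ ≤ find hQ' since find hQ' satisfies Qp s s
          obtain ⟨h1rr, h1or⟩ := Nat.find_spec hQ'
          have hB := hg.lemB huw h1rr h1or
          have hr's : vA (Nat.find hQ') s = true := by
            rcases hor with h | h
            · exact hg.barb u s _ h hB.1
            · exact hg.barb w s _ h hB.2
          have hsr' : vA s (Nat.find hQ') = true :=
            (hg.lemA hss hr's (hg.e3 _ h1rr)).1
          exact Nat.find_min' hQ ⟨h1rr, Or.inl hsr'⟩
      rw [← heq, hfind]
    · exact (normp_mem_iff hg hiss).mpr (Or.inl hasp)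

/-- Evaluation in the canonical model agrees with the boolean valuation. -/
theorem model_beval (hg : Good vA vI vEp) (φ : EForm) :
    eval (Dmod vA vI vEp) φ ↔
      beval vA vI (fun s p => !vI s p) (fun s p => !vA s p) vEp φ = true := by
  induction φ with
  | atomA s p => simpa [eval, beval] using atomA_iff hg s p
  | atomI s p => simpa [eval, beval] using atomI_iff hg s p
  | atomE s p => simp [eval, beval, atomI_iff hg s p]
  | atomO s p => simp [eval, beval, atomA_iff hg s p]
  | atomEps s p => simpa [eval, beval] using atomEps_iff hg s p
  | neg φ ih => simp [eval, beval, ih]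
  | conj φ ψ ih1 ih2 => simp [eval, beval, ih1, ih2]
  | disj φ ψ ih1 ih2 => simp [eval, beval, ih1, ih2]
  | impl φ ψ ih1 ih2 => simp [eval, beval, ih1, ih2, imp_iff_not_or]
  | equiv φ ψ ih1 ih2 => simp [eval, beval, ih1, ih2, Bool.beq_eq_decide_eq]

end ShAux
namespace ShAux

/-- The name letters occurring in a formula. -/
def letters : EForm → List Nat
  | .atomA s p => [s, p]
  | .atomI s p => [s, p]
  | .atomE s p => [s, p]
  | .atomO s p => [s, p]
  | .atomEps s p => [s, p]
  | .neg φ => letters φ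
  | .conj φ ψ => letters φ ++ letters ψ
  | .disj φ ψ => letters φ ++ letters ψ
  | .impl φ ψ => letters φ ++ letters ψ
  | .equiv φ ψ => letters φ ++ letters ψ

/-- All instances of the specific axioms with letters from `L`. -/
def axInsts (L : List Nat) : List EForm :=
  L.flatMap fun S => L.flatMap fun M => L.flatMap fun P =>
    [atomA S S,
     impl (conj (atomA M P) (atomA S M)) (atomA S P),
     impl (conj (atomA M P) (atomI M S)) (atomI S P),
     impl (atomI S P) (atomI S S),
     impl (neg (atomI S S)) (atomA S P),
     equiv (atomE S P) (neg (atomI S P)),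
     equiv (atomO S P) (neg (atomA S P)),
     impl (atomEps S P) (atomEps S S),
     impl (atomEps S P) (atomA S P),
     impl (atomEps S S) (atomI S S),
     impl (conj (atomA S M) (conj (atomEps M M) (atomI S P))) (atomEps S P)]

theorem axInsts_ax {L : List Nat} {ψ : EForm} (h : ψ ∈ axInsts L) : ShEpsAx ψ := by
  simp only [axInsts, List.mem_flatMap, List.mem_cons, List.mem_singleton] at h
  obtain ⟨S, -, M, -, P, -, h⟩ := h
  unfold ShEpsAx
  rcases h with rfl|rfl|rfl|rfl|rfl|rfl|rfl|rfl|rfl|rfl|rfl|h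
  · exact Or.inl ⟨S, rfl⟩
  · exact Or.inr (Or.inl ⟨M, P, S, rfl⟩)
  · exact Or.inr (Or.inr (Or.inl ⟨M, P, S, rfl⟩))
  · exact Or.inr (Or.inr (Or.inr (Or.inl ⟨S, P, rfl⟩)))
  · exact Or.inr (Or.inr (Or.inr (Or.inr (Or.inl ⟨S, P, rfl⟩))))
  · exact Or.inr (Or.inr (Or.inr (Or.inr (Or.inr (Or.inl ⟨S, P, rfl⟩)))))
  · exact Or.inr (Or.inr (Or.inr (Or.inr (Or.inr (Or.inr (Or.inl ⟨S, P, rfl⟩))))))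
  · exact Or.inr (Or.inr (Or.inr (Or.inr (Or.inr (Or.inr (Or.inr (Or.inl ⟨S, P, rfl⟩)))))))
  · exact Or.inr (Or.inr (Or.inr (Or.inr (Or.inr (Or.inr (Or.inr (Or.inr (Or.inl ⟨S, P, rfl⟩))))))))
  · exact Or.inr (Or.inr (Or.inr (Or.inr (Or.inr (Or.inr (Or.inr (Or.inr (Or.inr (Or.inl ⟨S, rfl⟩)))))))))
  · exact Or.inr (Or.inr (Or.inr (Or.inr (Or.inr (Or.inr (Or.inr (Or.inr (Or.inr (Or.inr ⟨S, M, P, rfl⟩)))))))))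
  · exact absurd h (by simp)

theorem mem_axInsts {L : List Nat} {S M P : Nat} (hS : S ∈ L) (hM : M ∈ L) (hP : P ∈ L)
    {ψ : EForm} (hmem : ψ ∈ [atomA S S,
     impl (conj (atomA M P) (atomA S M)) (atomA S P),
     impl (conj (atomA M P) (atomI M S)) (atomI S P),
     impl (atomI S P) (atomI S S),
     impl (neg (atomI S S)) (atomA S P),
     equiv (atomE S P) (neg (atomI S P)),
     equiv (atomO S P) (neg (atomA S P)),
     impl (atomEps S P) (atomEps S S),
     impl (atomEps S P) (atomA S P),
     impl (atomEps S S) (atomI S S),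
     impl (conj (atomA S M) (conj (atomEps M M) (atomI S P))) (atomEps S P)]) :
    ψ ∈ axInsts L := by
  simp only [axInsts, List.mem_flatMap]
  exact ⟨S, hS, M, hM, P, hP, hmem⟩

theorem deriv_foldr {Ax : EForm → Prop} {φ : EForm} :
    ∀ l : List EForm, Deriv Ax (l.foldr impl φ) → (∀ ψ ∈ l, Deriv Ax ψ) →
      Deriv Ax φ := by
  intro l
  induction l with
  | nil => intro h _; exact h
  | cons a l ih =>
    intro h hall
    exact ih (h.mp (hall a (by simp))) fun ψ hψ => hall ψ (by simp [hψ])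

theorem beval_foldr (vA vI vE vO vEp : Nat → Nat → Bool) (φ : EForm) :
    ∀ l : List EForm,
      (∀ ψ ∈ l, beval vA vI vE vO vEp ψ = true) →
      beval vA vI vE vO vEp (l.foldr impl φ) = true →
      beval vA vI vE vO vEp φ = true := by
  intro l
  induction l with
  | nil => intro _ h; exact h
  | cons a l ih =>
    intro hall h
    simp only [List.foldr_cons, beval, Bool.or_eq_true, Bool.not_eq_true'] at h
    rcases h with h | h
    · rw [hall a (by simp)] at h; cases h
    · exact ih (fun ψ hψ => hall ψ (by simp [hψ])) h

theorem beval_foldr_intro (vA vI vE vO vEp : Nat → Nat → Bool) (φ : EForm) :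
    ∀ l : List EForm,
      ((∀ ψ ∈ l, beval vA vI vE vO vEp ψ = true) → beval vA vI vE vO vEp φ = true) →
      beval vA vI vE vO vEp (l.foldr impl φ) = true := by
  intro l
  induction l with
  | nil => intro h; exact h (by simp)
  | cons a l ih =>
    intro h
    simp only [List.foldr_cons, beval, Bool.or_eq_true, Bool.not_eq_true']
    by_cases ha : beval vA vI vE vO vEp a = true
    · refine Or.inr (ih fun hh => h ?_)
      intro ψ hψ
      rcases List.mem_cons.mp hψ with rfl | hψ
      · exact ha
      · exact hh ψ hψ
    · exact Or.inl (by simpa using ha)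

/-- Two valuations agreeing on the atoms of `φ` give the same value. -/
theorem beval_congr {vA vI vE vO vEp vA' vI' vE' vO' vEp' : Nat → Nat → Bool}
    (φ : EForm)
    (h : ∀ s p, s ∈ letters φ → p ∈ letters φ →
      vA s p = vA' s p ∧ vI s p = vI' s p ∧ vE s p = vE' s p ∧
      vO s p = vO' s p ∧ vEp s p = vEp' s p) :
    beval vA vI vE vO vEp φ = beval vA' vI' vE' vO' vEp' φ := by
  induction φ with
  | atomA s p => exact (h s p (by simp [letters]) (by simp [letters])).1
  | atomI s p => exact (h s p (by simp [letters]) (by simp [letters])).2.1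
  | atomE s p => exact (h s p (by simp [letters]) (by simp [letters])).2.2.1
  | atomO s p => exact (h s p (by simp [letters]) (by simp [letters])).2.2.2.1
  | atomEps s p => exact (h s p (by simp [letters]) (by simp [letters])).2.2.2.2
  | neg φ ih => simp only [beval]; rw [ih h]
  | conj φ ψ ih1 ih2 =>
    simp only [beval]
    rw [ih1 fun s p hs hp => h s p (by simp [letters, hs]) (by simp [letters, hp]),
      ih2 fun s p hs hp => h s p (by simp [letters, hs]) (by simp [letters, hp])]
  | disj φ ψ ih1 ih2 =>
    simp only [beval]
    rw [ih1 fun s p hs hp => h s p (by simp [letters, hs]) (by simp [letters, hp]),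
      ih2 fun s p hs hp => h s p (by simp [letters, hs]) (by simp [letters, hp])]
  | impl φ ψ ih1 ih2 =>
    simp only [beval]
    rw [ih1 fun s p hs hp => h s p (by simp [letters, hs]) (by simp [letters, hp]),
      ih2 fun s p hs hp => h s p (by simp [letters, hs]) (by simp [letters, hp])]
  | equiv φ ψ ih1 ih2 =>
    simp only [beval]
    rw [ih1 fun s p hs hp => h s p (by simp [letters, hs]) (by simp [letters, hp]),
      ih2 fun s p hs hp => h s p (by simp [letters, hs]) (by simp [letters, hp])]

end ShAux
namespace ShAux

theorem bool_impl1 {a b : Bool} (h : (!a || b) = true) : a = true → b = true := by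
  cases a <;> cases b <;> simp_all

theorem bool_impl2 {a b c : Bool} (h : (!(a && b) || c) = true) :
    a = true → b = true → c = true := by
  cases a <;> cases b <;> cases c <;> simp_all

theorem bool_impl3 {a b c d : Bool} (h : (!(a && (b && c)) || d) = true) :
    a = true → b = true → c = true → d = true := by
  cases a <;> cases b <;> cases c <;> cases d <;> simp_all

theorem bool_impl_neg {a b : Bool} (h : (!(!a) || b) = true) : a ≠ true → b = true := by
  cases a <;> cases b <;> simp_all

theorem completeness {φ : EForm}
    (hsem : ∀ (U : Type) (D : Nat → Set U), eval D φ) : Deriv ShEpsAx φ := by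
  refine deriv_foldr (axInsts (0 :: letters φ)) (Deriv.taut ?_)
    (fun ψ hψ => Deriv.ax (axInsts_ax hψ))
  intro vA vI vE vO vEp
  apply beval_foldr_intro
  intro hall
  set L : List Nat := 0 :: letters φ with hLdef
  -- the renaming into L
  let ρ : Nat → Nat := fun n => if n ∈ L then n else 0
  have hρmem : ∀ n, ρ n ∈ L := by
    intro n
    by_cases h : n ∈ L
    · simpa [ρ] using (if_pos h ▸ h)
    · simp only [ρ, if_neg h]; exact List.mem_cons_self
  have hρid : ∀ {n}, n ∈ letters φ → ρ n = n := by
    intro n hn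
    simp only [ρ]
    exact if_pos (List.mem_cons_of_mem _ hn)
  -- the renamed valuation
  set vA' : Nat → Nat → Bool := fun s p => vA (ρ s) (ρ p) with hvA'
  set vI' : Nat → Nat → Bool := fun s p => vI (ρ s) (ρ p) with hvI'
  set vEp' : Nat → Nat → Bool := fun s p => vEp (ρ s) (ρ p) with hvEp'
  have inst : ∀ (S M P : Nat), S ∈ L → M ∈ L → P ∈ L →
      ∀ ψ ∈ [atomA S S,
        impl (conj (atomA M P) (atomA S M)) (atomA S P),
        impl (conj (atomA M P) (atomI M S)) (atomI S P),
        impl (atomI S P) (atomI S S),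
        impl (neg (atomI S S)) (atomA S P),
        equiv (atomE S P) (neg (atomI S P)),
        equiv (atomO S P) (neg (atomA S P)),
        impl (atomEps S P) (atomEps S S),
        impl (atomEps S P) (atomA S P),
        impl (atomEps S S) (atomI S S),
        impl (conj (atomA S M) (conj (atomEps M M) (atomI S P))) (atomEps S P)],
      beval vA vI vE vO vEp ψ = true := by
    intro S M P hS hM hP ψ hψ
    exact hall ψ (mem_axInsts hS hM hP hψ)
  have hgood : Good vA' vI' vEp' := by
    constructor
    · intro s
      exact inst (ρ s) (ρ s) (ρ s) (hρmem s) (hρmem s) (hρmem s)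
        (atomA (ρ s) (ρ s)) (by simp)
    · intro m p s
      exact bool_impl2 (inst (ρ s) (ρ m) (ρ p) (hρmem s) (hρmem m) (hρmem p)
        (impl (conj (atomA (ρ m) (ρ p)) (atomA (ρ s) (ρ m))) (atomA (ρ s) (ρ p))) (by simp))
    · intro m p s
      exact bool_impl2 (inst (ρ s) (ρ m) (ρ p) (hρmem s) (hρmem m) (hρmem p)
        (impl (conj (atomA (ρ m) (ρ p)) (atomI (ρ m) (ρ s))) (atomI (ρ s) (ρ p))) (by simp))
    · intro s p
      exact bool_impl1 (inst (ρ s) (ρ s) (ρ p) (hρmem s) (hρmem s) (hρmem p)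
        (impl (atomI (ρ s) (ρ p)) (atomI (ρ s) (ρ s))) (by simp))
    · intro s p
      exact bool_impl_neg (inst (ρ s) (ρ s) (ρ p) (hρmem s) (hρmem s) (hρmem p)
        (impl (neg (atomI (ρ s) (ρ s))) (atomA (ρ s) (ρ p))) (by simp))
    · intro s p
      exact bool_impl1 (inst (ρ s) (ρ s) (ρ p) (hρmem s) (hρmem s) (hρmem p)
        (impl (atomEps (ρ s) (ρ p)) (atomEps (ρ s) (ρ s))) (by simp))
    · intro s p
      exact bool_impl1 (inst (ρ s) (ρ s) (ρ p) (hρmem s) (hρmem s) (hρmem p)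
        (impl (atomEps (ρ s) (ρ p)) (atomA (ρ s) (ρ p))) (by simp))
    · intro s
      exact bool_impl1 (inst (ρ s) (ρ s) (ρ s) (hρmem s) (hρmem s) (hρmem s)
        (impl (atomEps (ρ s) (ρ s)) (atomI (ρ s) (ρ s))) (by simp))
    · intro s m p
      exact bool_impl3 (inst (ρ s) (ρ m) (ρ p) (hρmem s) (hρmem m) (hρmem p)
        (impl (conj (atomA (ρ s) (ρ m)) (conj (atomEps (ρ m) (ρ m)) (atomI (ρ s) (ρ p))))
          (atomEps (ρ s) (ρ p))) (by simp))
  have hb' : beval vA' vI' (fun s p => !vI' s p) (fun s p => !vA' s p) vEp' φ = true :=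
    (model_beval hgood φ).mp (hsem _ (Dmod vA' vI' vEp'))
  rw [beval_congr φ (vA' := vA') (vI' := vI') (vE' := fun s p => !vI' s p)
    (vO' := fun s p => !vA' s p) (vEp' := vEp') ?_]
  · exact hb'
  · intro s p hs hp
    have hjs : ρ s = s := hρid hs
    have hjp : ρ p = p := hρid hp
    have hsL : s ∈ L := List.mem_cons_of_mem _ hs
    have hpL : p ∈ L := List.mem_cons_of_mem _ hp
    have hE : vE s p = !(vI s p) := by
      have := inst s p p hsL hpL hpL (equiv (atomE s p) (neg (atomI s p)))
        (by simp)
      simpa [beval] using this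
    have hO : vO s p = !(vA s p) := by
      have := inst s p p hsL hpL hpL (equiv (atomO s p) (neg (atomA s p)))
        (by simp)
      simpa [beval] using this
    refine ⟨by simp [hvA', hjs, hjp], by simp [hvI', hjs, hjp], ?_, ?_,
      by simp [hvEp', hjs, hjp]⟩
    · simp [hE, hvI', hjs, hjp]
    · simp [hO, hvA', hjs, hjp]

end ShAux

open EForm

/-- Sh+ε (Shepherdson's system with Leśniewski's copula) is sound and
complete: a formula is a thesis of Sh+ε iff it is true in every model
`(U, D)`, where `S ε P` is interpreted as `D S` being a singleton included
in `D P`. -/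
theorem sh_eps_sound_complete (φ : EForm) :
    Deriv ShEpsAx φ ↔ ∀ (U : Type) (D : Nat → Set U), eval D φ :=
  ⟨ShAux.soundness, ShAux.completeness⟩
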